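/- arXiv:1703.04864 — 8 statements merged into one kernel-verified Lean document; each statement's English description precedes it below -/
import Mathlib

section
/- Let B ∈ ℝ^{n×q}, A ∈ ℝ^{n×m}, Φ a set of m×q matrices, and f a mapping satisfying f(X, W·A) = W·f(X,A) for all weight matrices W. Let C_1,…,C_K partition {1,…,n}, with aggregated data B_k^agg = (1/|C_k|)∑_{i∈C_k} B_i and A_k^agg = (1/|C_k|)∑_{i∈C_k} A_i. Then for every X ∈ Φ: ∑_{k=1}^K |C_k| · ‖B_k^agg − f_k(X, A^agg)‖₁ ≤ ‖B − f(X,A)‖₁, i.e., the aggregated objective is a lower bound on the original objective for every feasible X. -/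
open Finset

/-- The weighted aggregated L1 objective is a lower bound on the original L1
objective for every feasible `X`. -/
theorem stmt_4 {m q n K : ℕ}
    (f : ∀ {r : ℕ}, Matrix (Fin m) (Fin q) ℝ → Matrix (Fin r) (Fin m) ℝ →
      Matrix (Fin r) (Fin q) ℝ)
    (hf : ∀ {p r : ℕ} (X : Matrix (Fin m) (Fin q) ℝ)
      (W : Matrix (Fin p) (Fin r) ℝ) (A : Matrix (Fin r) (Fin m) ℝ),
      f X (W * A) = W * f X A)
    (c : Fin n → Fin K) (hc : ∀ k : Fin K, ∃ i, c i = k)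
    (B : Matrix (Fin n) (Fin q) ℝ) (A : Matrix (Fin n) (Fin m) ℝ)
    (Bagg : Matrix (Fin K) (Fin q) ℝ) (Aagg : Matrix (Fin K) (Fin m) ℝ)
    (hBagg : ∀ k j, Bagg k j =
      (∑ i ∈ univ.filter (fun i => c i = k), B i j) /
        ((univ.filter (fun i => c i = k)).card : ℝ))
    (hAagg : ∀ k j, Aagg k j =
      (∑ i ∈ univ.filter (fun i => c i = k), A i j) /
        ((univ.filter (fun i => c i = k)).card : ℝ))
    (Φ : Set (Matrix (Fin m) (Fin q) ℝ)) :
    ∀ X ∈ Φ,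
      (∑ k, ((univ.filter (fun i => c i = k)).card : ℝ) *
        ∑ j, |Bagg k j - f X Aagg k j|) ≤
      ∑ i, ∑ j, |B i j - f X A i j| := by
  intro X _
  set S : Fin K → Finset (Fin n) := fun k => univ.filter (fun i => c i = k) with hS
  have hpos : ∀ k, 0 < ((S k).card : ℝ) := by
    intro k
    obtain ⟨i, hi⟩ := hc k
    have hmem : i ∈ S k := by simp [hS, hi]
    exact_mod_cast Finset.card_pos.mpr ⟨i, hmem⟩
  set W : Matrix (Fin K) (Fin n) ℝ :=
    fun k i => if c i = k then 1 / ((S k).card : ℝ) else 0 with hW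
  have hWmul : ∀ {r : ℕ} (M : Matrix (Fin n) (Fin r) ℝ) (k : Fin K) (j : Fin r),
      (W * M) k j = (∑ i ∈ S k, M i j) / ((S k).card : ℝ) := by
    intro r M k j
    simp only [Matrix.mul_apply]
    simp only [hW, ite_mul, zero_mul]
    rw [← Finset.sum_filter, ← Finset.mul_sum, one_div, inv_mul_eq_div]
  have hA : Aagg = W * A := by
    ext k j; rw [hAagg, hWmul]
  have hfagg : ∀ k j, f X Aagg k j =
      (∑ i ∈ S k, f X A i j) / ((S k).card : ℝ) := by
    intro k j
    rw [hA, hf, hWmul]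
  have key : ∀ k, ((S k).card : ℝ) * ∑ j, |Bagg k j - f X Aagg k j|
      ≤ ∑ i ∈ S k, ∑ j, |B i j - f X A i j| := by
    intro k
    have h1 : ∀ j, |Bagg k j - f X Aagg k j|
        = |∑ i ∈ S k, (B i j - f X A i j)| / ((S k).card : ℝ) := by
      intro j
      rw [hBagg, hfagg, div_sub_div_same, Finset.sum_sub_distrib,
        abs_div, abs_of_pos (hpos k)]
    calc ((S k).card : ℝ) * ∑ j, |Bagg k j - f X Aagg k j|
        = ∑ j, |∑ i ∈ S k, (B i j - f X A i j)| := by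
          simp only [h1, ← Finset.sum_div]
          rw [mul_div_cancel₀]
          exact (hpos k).ne'
      _ ≤ ∑ j, ∑ i ∈ S k, |B i j - f X A i j| :=
          Finset.sum_le_sum fun j _ => Finset.abs_sum_le_sum_abs _ _
      _ = ∑ i ∈ S k, ∑ j, |B i j - f X A i j| := Finset.sum_comm
  calc (∑ k, ((S k).card : ℝ) * ∑ j, |Bagg k j - f X Aagg k j|)
      ≤ ∑ k, ∑ i ∈ S k, ∑ j, |B i j - f X A i j| :=
        Finset.sum_le_sum fun k _ => key k
    _ = ∑ i, ∑ j, |B i j - f X A i j| := by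
        rw [hS]
        exact Finset.sum_fiberwise _ _ _
end

section
/- In the setting of the aggregated L1-fitting problem, let X̄ be an optimal solution of the aggregated problem min_{X ∈ Φ} ∑_{k=1}^K |C_k| ‖B_k^agg − f_k(X, A^agg)‖₁. Suppose that for every cluster k and every coordinate j ∈ {1,…,q}, the residuals (B_i − f_i(X̄, A))_j for i ∈ C_k all have the same sign. Then X̄ is a global optimum of the original problem min_{X ∈ Φ} ‖B − f(X,A)‖₁. -/
open Finset

/-- Lemma 2 of the paper (optimality condition): if `X̄` optimally solves the
weighted aggregated problem and within every cluster the residuals share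
coordinatewise signs, then `X̄` is a global optimum of the original problem. -/
theorem stmt_5 {m q n K : ℕ}
    (f : ∀ {r : ℕ}, Matrix (Fin m) (Fin q) ℝ → Matrix (Fin r) (Fin m) ℝ →
      Matrix (Fin r) (Fin q) ℝ)
    (hf : ∀ {p r : ℕ} (X : Matrix (Fin m) (Fin q) ℝ)
      (W : Matrix (Fin p) (Fin r) ℝ) (A : Matrix (Fin r) (Fin m) ℝ),
      f X (W * A) = W * f X A)
    (c : Fin n → Fin K) (hc : ∀ k : Fin K, ∃ i, c i = k)
    (B : Matrix (Fin n) (Fin q) ℝ) (A : Matrix (Fin n) (Fin m) ℝ)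
    (Bagg : Matrix (Fin K) (Fin q) ℝ) (Aagg : Matrix (Fin K) (Fin m) ℝ)
    (hBagg : ∀ k j, Bagg k j =
      (∑ i ∈ univ.filter (fun i => c i = k), B i j) /
        ((univ.filter (fun i => c i = k)).card : ℝ))
    (hAagg : ∀ k j, Aagg k j =
      (∑ i ∈ univ.filter (fun i => c i = k), A i j) /
        ((univ.filter (fun i => c i = k)).card : ℝ))
    (Φ : Set (Matrix (Fin m) (Fin q) ℝ))
    (Xbar : Matrix (Fin m) (Fin q) ℝ) (hXbar : Xbar ∈ Φ)
    (hopt : ∀ X ∈ Φ,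
      (∑ k, ((univ.filter (fun i => c i = k)).card : ℝ) *
        ∑ j, |Bagg k j - f Xbar Aagg k j|) ≤
      (∑ k, ((univ.filter (fun i => c i = k)).card : ℝ) *
        ∑ j, |Bagg k j - f X Aagg k j|))
    (hsign : ∀ k : Fin K, ∀ j : Fin q,
      (∀ i ∈ univ.filter (fun i => c i = k), 0 ≤ B i j - f Xbar A i j) ∨
      (∀ i ∈ univ.filter (fun i => c i = k), B i j - f Xbar A i j ≤ 0)) :
    ∀ X ∈ Φ,
      (∑ i, ∑ j, |B i j - f Xbar A i j|) ≤ ∑ i, ∑ j, |B i j - f X A i j| := by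
  intro X hX
  set Ck : Fin K → Finset (Fin n) := fun k => univ.filter (fun i => c i = k) with hCk
  have hNpos : ∀ k, 0 < ((Ck k).card : ℝ) := by
    intro k
    obtain ⟨i, hi⟩ := hc k
    have : i ∈ Ck k := by simp [hCk, hi]
    exact_mod_cast Finset.card_pos.mpr ⟨i, this⟩
  -- averaging matrix
  set W : Matrix (Fin K) (Fin n) ℝ :=
    fun k i => (if c i = k then 1 else 0) / ((Ck k).card : ℝ) with hW
  have hWA : Aagg = W * A := by
    ext k j
    rw [hAagg k j, Matrix.mul_apply]
    simp only [hW, div_mul_eq_mul_div, ite_mul, one_mul, zero_mul]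
    rw [← Finset.sum_div]
    congr 1
    rw [Finset.sum_filter]
  -- residual average formula
  have key : ∀ (Y : Matrix (Fin m) (Fin q) ℝ) (k : Fin K) (j : Fin q),
      Bagg k j - f Y Aagg k j =
        (∑ i ∈ Ck k, (B i j - f Y A i j)) / ((Ck k).card : ℝ) := by
    intro Y k j
    have h1 : f Y Aagg = W * f Y A := by rw [hWA, hf]
    rw [hBagg k j, h1, Matrix.mul_apply]
    have h2 : ∑ i, W k i * f Y A i j
        = (∑ i ∈ Ck k, f Y A i j) / ((Ck k).card : ℝ) := by
      simp only [hW, div_mul_eq_mul_div, ite_mul, one_mul, zero_mul]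
      rw [← Finset.sum_div]
      congr 1
      rw [Finset.sum_filter]
    rw [h2, ← sub_div, ← Finset.sum_sub_distrib]
  -- aggregated term rewriting
  have term : ∀ (Y : Matrix (Fin m) (Fin q) ℝ) (k : Fin K) (j : Fin q),
      ((Ck k).card : ℝ) * |Bagg k j - f Y Aagg k j|
        = |∑ i ∈ Ck k, (B i j - f Y A i j)| := by
    intro Y k j
    rw [key, abs_div, abs_of_pos (hNpos k), mul_div_cancel₀ _ (ne_of_gt (hNpos k))]
  -- aggregated objective at Xbar equals original objective at Xbar
  have eq1 : (∑ k, ((Ck k).card : ℝ) * ∑ j, |Bagg k j - f Xbar Aagg k j|)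
      = ∑ i, ∑ j, |B i j - f Xbar A i j| := by
    calc ∑ k, ((Ck k).card : ℝ) * ∑ j, |Bagg k j - f Xbar Aagg k j|
        = ∑ k, ∑ j, ((Ck k).card : ℝ) * |Bagg k j - f Xbar Aagg k j| := by
          simp [Finset.mul_sum]
      _ = ∑ k, ∑ j, ∑ i ∈ Ck k, |B i j - f Xbar A i j| := by
          refine Finset.sum_congr rfl fun k _ => Finset.sum_congr rfl fun j _ => ?_
          rw [term]
          rcases hsign k j with h | h
          · rw [Finset.abs_sum_of_nonneg h]
            exact Finset.sum_congr rfl fun i hi => (abs_of_nonneg (h i hi)).symm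
          · have hs : ∑ i ∈ Ck k, (B i j - f Xbar A i j) ≤ 0 := Finset.sum_nonpos h
            rw [abs_of_nonpos hs, ← Finset.sum_neg_distrib]
            exact Finset.sum_congr rfl fun i hi => ((abs_of_nonpos (h i hi)).symm)
      _ = ∑ k, ∑ i ∈ Ck k, ∑ j, |B i j - f Xbar A i j| := by
          exact Finset.sum_congr rfl fun k _ => (Finset.sum_comm)
      _ = ∑ i, ∑ j, |B i j - f Xbar A i j| := by
          exact Finset.sum_fiberwise univ c _
  -- aggregated objective at X is at most original objective at X
  have le2 : (∑ k, ((Ck k).card : ℝ) * ∑ j, |Bagg k j - f X Aagg k j|)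
      ≤ ∑ i, ∑ j, |B i j - f X A i j| := by
    calc ∑ k, ((Ck k).card : ℝ) * ∑ j, |Bagg k j - f X Aagg k j|
        = ∑ k, ∑ j, |∑ i ∈ Ck k, (B i j - f X A i j)| := by
          simp only [Finset.mul_sum]
          exact Finset.sum_congr rfl fun k _ => Finset.sum_congr rfl fun j _ => term X k j
      _ ≤ ∑ k, ∑ j, ∑ i ∈ Ck k, |B i j - f X A i j| := by
          refine Finset.sum_le_sum fun k _ => Finset.sum_le_sum fun j _ => ?_
          exact Finset.abs_sum_le_sum_abs _ _
      _ = ∑ k, ∑ i ∈ Ck k, ∑ j, |B i j - f X A i j| := by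
          exact Finset.sum_congr rfl fun k _ => (Finset.sum_comm)
      _ = ∑ i, ∑ j, |B i j - f X A i j| := Finset.sum_fiberwise univ c _
  calc ∑ i, ∑ j, |B i j - f Xbar A i j|
      = ∑ k, ((Ck k).card : ℝ) * ∑ j, |Bagg k j - f Xbar Aagg k j| := eq1.symm
    _ ≤ ∑ k, ((Ck k).card : ℝ) * ∑ j, |Bagg k j - f X Aagg k j| := hopt X hX
    _ ≤ ∑ i, ∑ j, |B i j - f X A i j| := le2
end

section
/- Consider two partitions C^{t−1} and C^t of {1,…,n} such that C^t refines C^{t−1} (every cluster of C^t is contained in some cluster of C^{t−1}). Let F(C) = min_{X ∈ Φ} ∑_{k} |C_k| ‖B_k^agg(C) − f_k(X, A^agg(C))‖₁ denote the optimal value of the aggregated problem for partition C, where aggregated data is given by within-cluster arithmetic means. If f satisfies f(X, WA) = W f(X,A), then F(C^{t−1}) ≤ F(C^t): the optimal aggregated objective is nondecreasing under refinement of the partition. -/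
open Finset

lemma fiber_split {n K₁ K₂ : ℕ} {c₁ : Fin n → Fin K₁} {c₂ : Fin n → Fin K₂}
    {σ : Fin K₂ → Fin K₁} (hσ : ∀ i, σ (c₂ i) = c₁ i) (k : Fin K₁) (g : Fin n → ℝ) :
    ∑ i ∈ univ.filter (fun i => c₁ i = k), g i
      = ∑ l ∈ univ.filter (fun l => σ l = k), ∑ i ∈ univ.filter (fun i => c₂ i = l), g i := by
  rw [← Finset.sum_fiberwise (univ.filter (fun i => c₁ i = k)) c₂ g, Finset.sum_filter]
  refine Finset.sum_congr rfl fun l _ => ?_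
  rw [Finset.filter_filter]
  by_cases h : σ l = k
  · simp only [h, if_true]
    refine Finset.sum_congr (Finset.filter_congr fun i _ => ?_) fun _ _ => rfl
    constructor
    · exact fun hi => hi.2
    · intro hi
      refine ⟨?_, hi⟩
      rw [← hσ i, hi, h]
  · simp only [h, if_false]
    rw [Finset.filter_false_of_mem, Finset.sum_empty]
    intro i _ hi
    exact h (by rw [← hi.2]; rw [hσ i, hi.1])


/-- Lemma 3 of the paper: the optimal value of the aggregated problem is
nondecreasing under refinement of the partition. -/
theorem stmt_6 {m q n K₁ K₂ : ℕ}
    (f : ∀ {r : ℕ}, Matrix (Fin m) (Fin q) ℝ → Matrix (Fin r) (Fin m) ℝ →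
      Matrix (Fin r) (Fin q) ℝ)
    (hf : ∀ {p r : ℕ} (X : Matrix (Fin m) (Fin q) ℝ)
      (W : Matrix (Fin p) (Fin r) ℝ) (A : Matrix (Fin r) (Fin m) ℝ),
      f X (W * A) = W * f X A)
    (c₁ : Fin n → Fin K₁) (hc₁ : ∀ k, ∃ i, c₁ i = k)
    (c₂ : Fin n → Fin K₂) (hc₂ : ∀ k, ∃ i, c₂ i = k)
    -- `c₂` refines `c₁`: entries in the same `c₂`-cluster lie in the same `c₁`-cluster
    (href : ∀ i i', c₂ i = c₂ i' → c₁ i = c₁ i')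
    (B : Matrix (Fin n) (Fin q) ℝ) (A : Matrix (Fin n) (Fin m) ℝ)
    (Bagg₁ : Matrix (Fin K₁) (Fin q) ℝ) (Aagg₁ : Matrix (Fin K₁) (Fin m) ℝ)
    (Bagg₂ : Matrix (Fin K₂) (Fin q) ℝ) (Aagg₂ : Matrix (Fin K₂) (Fin m) ℝ)
    (hBagg₁ : ∀ k j, Bagg₁ k j =
      (∑ i ∈ univ.filter (fun i => c₁ i = k), B i j) /
        ((univ.filter (fun i => c₁ i = k)).card : ℝ))
    (hAagg₁ : ∀ k j, Aagg₁ k j =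
      (∑ i ∈ univ.filter (fun i => c₁ i = k), A i j) /
        ((univ.filter (fun i => c₁ i = k)).card : ℝ))
    (hBagg₂ : ∀ k j, Bagg₂ k j =
      (∑ i ∈ univ.filter (fun i => c₂ i = k), B i j) /
        ((univ.filter (fun i => c₂ i = k)).card : ℝ))
    (hAagg₂ : ∀ k j, Aagg₂ k j =
      (∑ i ∈ univ.filter (fun i => c₂ i = k), A i j) /
        ((univ.filter (fun i => c₂ i = k)).card : ℝ))
    (Φ : Set (Matrix (Fin m) (Fin q) ℝ))
    (X₁ X₂ : Matrix (Fin m) (Fin q) ℝ) (hX₁ : X₁ ∈ Φ) (hX₂ : X₂ ∈ Φ)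
    (hopt₁ : ∀ X ∈ Φ,
      (∑ k, ((univ.filter (fun i => c₁ i = k)).card : ℝ) *
        ∑ j, |Bagg₁ k j - f X₁ Aagg₁ k j|) ≤
      (∑ k, ((univ.filter (fun i => c₁ i = k)).card : ℝ) *
        ∑ j, |Bagg₁ k j - f X Aagg₁ k j|))
    (hopt₂ : ∀ X ∈ Φ,
      (∑ k, ((univ.filter (fun i => c₂ i = k)).card : ℝ) *
        ∑ j, |Bagg₂ k j - f X₂ Aagg₂ k j|) ≤
      (∑ k, ((univ.filter (fun i => c₂ i = k)).card : ℝ) *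
        ∑ j, |Bagg₂ k j - f X Aagg₂ k j|)) :
    (∑ k, ((univ.filter (fun i => c₁ i = k)).card : ℝ) *
        ∑ j, |Bagg₁ k j - f X₁ Aagg₁ k j|) ≤
    (∑ k, ((univ.filter (fun i => c₂ i = k)).card : ℝ) *
        ∑ j, |Bagg₂ k j - f X₂ Aagg₂ k j|) := by
  choose rep hrep using hc₂
  set σ : Fin K₂ → Fin K₁ := fun l => c₁ (rep l) with hσdef
  have hσ : ∀ i, σ (c₂ i) = c₁ i := fun i => href (rep (c₂ i)) i (hrep (c₂ i))
  set n₁ : Fin K₁ → ℝ := fun k => ((univ.filter (fun i => c₁ i = k)).card : ℝ) with hn₁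
  set n₂ : Fin K₂ → ℝ := fun l => ((univ.filter (fun i => c₂ i = l)).card : ℝ) with hn₂
  have hn₁pos : ∀ k, 0 < n₁ k := by
    intro k
    obtain ⟨i, hi⟩ := hc₁ k
    have hmem : i ∈ univ.filter (fun i => c₁ i = k) := by simp [hi]
    exact Nat.cast_pos.mpr (Finset.card_pos.mpr ⟨i, hmem⟩)
  have hn₂pos : ∀ l, 0 < n₂ l := by
    intro l
    have hmem : rep l ∈ univ.filter (fun i => c₂ i = l) := by simp [hrep]
    exact Nat.cast_pos.mpr (Finset.card_pos.mpr ⟨rep l, hmem⟩)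
  set W : Matrix (Fin K₁) (Fin K₂) ℝ :=
    fun k l => if σ l = k then n₂ l / n₁ k else 0 with hW
  have hWnn : ∀ k l, 0 ≤ W k l := by
    intro k l
    show (0 : ℝ) ≤ if σ l = k then n₂ l / n₁ k else 0
    split
    · exact div_nonneg (hn₂pos l).le (hn₁pos k).le
    · exact le_refl 0
  have hagg : ∀ (p : ℕ) (M : Matrix (Fin n) (Fin p) ℝ)
      (M₁ : Matrix (Fin K₁) (Fin p) ℝ) (M₂ : Matrix (Fin K₂) (Fin p) ℝ),
      (∀ k j, M₁ k j = (∑ i ∈ univ.filter (fun i => c₁ i = k), M i j) / n₁ k) →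
      (∀ l j, M₂ l j = (∑ i ∈ univ.filter (fun i => c₂ i = l), M i j) / n₂ l) →
      M₁ = W * M₂ := by
    intro p M M₁ M₂ h₁ h₂
    funext k j
    rw [Matrix.mul_apply, h₁, fiber_split hσ k (fun i => M i j), Finset.sum_div]
    have hterm : ∀ l : Fin K₂, W k l * M₂ l j =
        if σ l = k then (∑ i ∈ univ.filter (fun i => c₂ i = l), M i j) / n₁ k else 0 := by
      intro l
      show (if σ l = k then n₂ l / n₁ k else 0) * M₂ l j = _
      by_cases h : σ l = k
      · rw [if_pos h, if_pos h, h₂]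
        field_simp
        rw [mul_div_mul_left _ _ (hn₂pos l).ne']
      · rw [if_neg h, if_neg h, zero_mul]
    rw [Finset.sum_congr rfl fun l _ => hterm l, ← Finset.sum_filter]
  have hB : Bagg₁ = W * Bagg₂ := hagg q B Bagg₁ Bagg₂ hBagg₁ hBagg₂
  have hA : Aagg₁ = W * Aagg₂ := hagg m A Aagg₁ Aagg₂ hAagg₁ hAagg₂
  have hfA : f X₂ Aagg₁ = W * f X₂ Aagg₂ := by rw [hA, hf]
  have hdiff : ∀ k j, Bagg₁ k j - f X₂ Aagg₁ k j
      = ∑ l, W k l * (Bagg₂ l j - f X₂ Aagg₂ l j) := by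
    intro k j
    rw [hB, hfA, Matrix.mul_apply, Matrix.mul_apply, ← Finset.sum_sub_distrib]
    exact Finset.sum_congr rfl fun l _ => (mul_sub _ _ _).symm
  have key : (∑ k, n₁ k * ∑ j, |Bagg₁ k j - f X₂ Aagg₁ k j|)
      ≤ ∑ l, n₂ l * ∑ j, |Bagg₂ l j - f X₂ Aagg₂ l j| := by
    calc ∑ k, n₁ k * ∑ j, |Bagg₁ k j - f X₂ Aagg₁ k j|
        ≤ ∑ k, n₁ k * ∑ j, ∑ l, W k l * |Bagg₂ l j - f X₂ Aagg₂ l j| := by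
          refine Finset.sum_le_sum fun k _ => ?_
          refine mul_le_mul_of_nonneg_left ?_ (hn₁pos k).le
          refine Finset.sum_le_sum fun j _ => ?_
          rw [hdiff]
          refine (Finset.abs_sum_le_sum_abs _ _).trans ?_
          refine Finset.sum_le_sum fun l _ => ?_
          rw [abs_mul, abs_of_nonneg (hWnn k l)]
      _ = ∑ k, ∑ l, (n₁ k * W k l) * ∑ j, |Bagg₂ l j - f X₂ Aagg₂ l j| := by
          refine Finset.sum_congr rfl fun k _ => ?_
          rw [Finset.sum_comm, Finset.mul_sum]
          refine Finset.sum_congr rfl fun l _ => ?_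
          rw [← Finset.mul_sum, ← mul_assoc]
      _ = ∑ k, ∑ l, (if σ l = k then n₂ l else 0) * ∑ j, |Bagg₂ l j - f X₂ Aagg₂ l j| := by
          refine Finset.sum_congr rfl fun k _ => Finset.sum_congr rfl fun l _ => ?_
          congr 1
          show n₁ k * (if σ l = k then n₂ l / n₁ k else 0) = _
          by_cases h : σ l = k
          · rw [if_pos h, if_pos h, mul_div_cancel₀ _ (hn₁pos k).ne']
          · rw [if_neg h, if_neg h, mul_zero]
      _ = ∑ l, n₂ l * ∑ j, |Bagg₂ l j - f X₂ Aagg₂ l j| := by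
          rw [Finset.sum_comm]
          refine Finset.sum_congr rfl fun l _ => ?_
          simp [ite_mul, Finset.sum_ite_eq]
  exact le_trans (hopt₁ X₂ hX₂) key
end

section
/- With notation as in the aggregated L1-fitting problem: for any partition C of {1,…,n}, the optimal value F(C) of the aggregated problem satisfies F(C) ≤ E*, where E* = min_{X ∈ Φ} ‖B − f(X,A)‖₁ is the optimal value of the original problem. Moreover, if C is the finest partition (every cluster a singleton), then F(C) = E*. -/
open Finset

/-- The optimal value of the aggregated problem is a lower bound on the optimal
value `E*` of the original problem, with equality for the finest (singleton)
partition. -/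
theorem stmt_7 {m q n K : ℕ}
    (f : ∀ {r : ℕ}, Matrix (Fin m) (Fin q) ℝ → Matrix (Fin r) (Fin m) ℝ →
      Matrix (Fin r) (Fin q) ℝ)
    (hf : ∀ {p r : ℕ} (X : Matrix (Fin m) (Fin q) ℝ)
      (W : Matrix (Fin p) (Fin r) ℝ) (A : Matrix (Fin r) (Fin m) ℝ),
      f X (W * A) = W * f X A)
    (c : Fin n → Fin K) (hc : ∀ k, ∃ i, c i = k)
    (B : Matrix (Fin n) (Fin q) ℝ) (A : Matrix (Fin n) (Fin m) ℝ)
    (Bagg : Matrix (Fin K) (Fin q) ℝ) (Aagg : Matrix (Fin K) (Fin m) ℝ)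
    (hBagg : ∀ k j, Bagg k j =
      (∑ i ∈ univ.filter (fun i => c i = k), B i j) /
        ((univ.filter (fun i => c i = k)).card : ℝ))
    (hAagg : ∀ k j, Aagg k j =
      (∑ i ∈ univ.filter (fun i => c i = k), A i j) /
        ((univ.filter (fun i => c i = k)).card : ℝ))
    (Φ : Set (Matrix (Fin m) (Fin q) ℝ))
    (Xagg Xstar : Matrix (Fin m) (Fin q) ℝ) (hXagg : Xagg ∈ Φ) (hXstar : Xstar ∈ Φ)
    (hoptagg : ∀ X ∈ Φ,
      (∑ k, ((univ.filter (fun i => c i = k)).card : ℝ) *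
        ∑ j, |Bagg k j - f Xagg Aagg k j|) ≤
      (∑ k, ((univ.filter (fun i => c i = k)).card : ℝ) *
        ∑ j, |Bagg k j - f X Aagg k j|))
    (hoptstar : ∀ X ∈ Φ,
      (∑ i, ∑ j, |B i j - f Xstar A i j|) ≤ ∑ i, ∑ j, |B i j - f X A i j|) :
    (∑ k, ((univ.filter (fun i => c i = k)).card : ℝ) *
        ∑ j, |Bagg k j - f Xagg Aagg k j|) ≤
      (∑ i, ∑ j, |B i j - f Xstar A i j|) ∧
    (Function.Injective c →
      (∑ k, ((univ.filter (fun i => c i = k)).card : ℝ) *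
          ∑ j, |Bagg k j - f Xagg Aagg k j|) =
        ∑ i, ∑ j, |B i j - f Xstar A i j|) := by
  classical
  have hNpos : ∀ k : Fin K, (0:ℝ) < ((univ.filter (fun i => c i = k)).card : ℝ) := by
    intro k
    obtain ⟨i, hi⟩ := hc k
    have hmem : i ∈ univ.filter (fun i => c i = k) := by simp [hi]
    exact_mod_cast Finset.card_pos.mpr ⟨i, hmem⟩
  set W : Matrix (Fin K) (Fin n) ℝ :=
    fun k i => (if c i = k then (1:ℝ) else 0) /
      ((univ.filter (fun i => c i = k)).card : ℝ) with hWdef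
  have hmul : ∀ (M : Matrix (Fin n) (Fin q) ℝ) (k : Fin K) (j : Fin q),
      (W * M) k j = (∑ i ∈ univ.filter (fun i => c i = k), M i j) /
        ((univ.filter (fun i => c i = k)).card : ℝ) := by
    intro M k j
    rw [Matrix.mul_apply, Finset.sum_filter, Finset.sum_div]
    apply Finset.sum_congr rfl
    intro i _
    by_cases h : c i = k <;> simp [hWdef, h, div_mul_eq_mul_div, inv_mul_eq_div]
  have hmulA : ∀ (M : Matrix (Fin n) (Fin m) ℝ) (k : Fin K) (j : Fin m),
      (W * M) k j = (∑ i ∈ univ.filter (fun i => c i = k), M i j) /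
        ((univ.filter (fun i => c i = k)).card : ℝ) := by
    intro M k j
    rw [Matrix.mul_apply, Finset.sum_filter, Finset.sum_div]
    apply Finset.sum_congr rfl
    intro i _
    by_cases h : c i = k <;> simp [hWdef, h, div_mul_eq_mul_div, inv_mul_eq_div]
  have hB : Bagg = W * B := by
    ext k j; rw [hmul, hBagg]
  have hA : Aagg = W * A := by
    ext k j; rw [hmulA, hAagg]
  -- entrywise formula for the aggregated residual
  have hres : ∀ (X : Matrix (Fin m) (Fin q) ℝ) (k : Fin K) (j : Fin q),
      Bagg k j - f X Aagg k j =
        (∑ i ∈ univ.filter (fun i => c i = k), (B i j - f X A i j)) /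
          ((univ.filter (fun i => c i = k)).card : ℝ) := by
    intro X k j
    have : Bagg - f X Aagg = W * (B - f X A) := by
      rw [hB, hA, hf, Matrix.mul_sub]
    calc Bagg k j - f X Aagg k j = (Bagg - f X Aagg) k j := by
            simp [Matrix.sub_apply]
      _ = (W * (B - f X A)) k j := by rw [this]
      _ = _ := by rw [hmul]; simp [Matrix.sub_apply]
  -- the key inequality: for every X the aggregated objective is ≤ the original one
  have keyle : ∀ (X : Matrix (Fin m) (Fin q) ℝ),
      (∑ k, ((univ.filter (fun i => c i = k)).card : ℝ) *
        ∑ j, |Bagg k j - f X Aagg k j|) ≤ ∑ i, ∑ j, |B i j - f X A i j| := by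
    intro X
    have step : ∀ k : Fin K,
        ((univ.filter (fun i => c i = k)).card : ℝ) *
          ∑ j, |Bagg k j - f X Aagg k j| ≤
        ∑ i ∈ univ.filter (fun i => c i = k), ∑ j, |B i j - f X A i j| := by
      intro k
      rw [Finset.sum_comm]
      have hterm : ∀ j : Fin q, |Bagg k j - f X Aagg k j| ≤
          (∑ i ∈ univ.filter (fun i => c i = k), |B i j - f X A i j|) /
            ((univ.filter (fun i => c i = k)).card : ℝ) := by
        intro j
        rw [hres, abs_div, abs_of_pos (hNpos k)]
        exact div_le_div_of_nonneg_right (Finset.abs_sum_le_sum_abs _ _) (hNpos k).le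
      calc ((univ.filter (fun i => c i = k)).card : ℝ) *
            ∑ j, |Bagg k j - f X Aagg k j|
          ≤ ((univ.filter (fun i => c i = k)).card : ℝ) *
            ∑ j, (∑ i ∈ univ.filter (fun i => c i = k), |B i j - f X A i j|) /
              ((univ.filter (fun i => c i = k)).card : ℝ) := by
            apply mul_le_mul_of_nonneg_left _ (le_of_lt (hNpos k))
            exact Finset.sum_le_sum fun j _ => hterm j
        _ = ∑ j, ∑ i ∈ univ.filter (fun i => c i = k), |B i j - f X A i j| := by
            rw [← Finset.sum_div, mul_div_cancel₀ _ (ne_of_gt (hNpos k))]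
    calc (∑ k, ((univ.filter (fun i => c i = k)).card : ℝ) *
          ∑ j, |Bagg k j - f X Aagg k j|)
        ≤ ∑ k, ∑ i ∈ univ.filter (fun i => c i = k), ∑ j, |B i j - f X A i j| :=
          Finset.sum_le_sum fun k _ => step k
      _ = ∑ i, ∑ j, |B i j - f X A i j| := by
          rw [Finset.sum_fiberwise]
  have h1 : (∑ k, ((univ.filter (fun i => c i = k)).card : ℝ) *
      ∑ j, |Bagg k j - f Xagg Aagg k j|) ≤ ∑ i, ∑ j, |B i j - f Xstar A i j| :=
    le_trans (hoptagg Xstar hXstar) (keyle Xstar)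
  refine ⟨h1, fun hinj => ?_⟩
  -- finest partition: `c` is a bijection
  have hbij : Function.Bijective c := ⟨hinj, fun k => hc k⟩
  set e := Equiv.ofBijective c hbij with he
  have hfib : ∀ k : Fin K, univ.filter (fun i => c i = k) = {e.symm k} := by
    intro k
    ext i
    simp only [Finset.mem_filter, Finset.mem_univ, true_and, Finset.mem_singleton]
    constructor
    · intro h; exact e.injective (by simpa [he, Equiv.ofBijective_apply] using h)
    · intro h; subst h
      exact e.apply_symm_apply k
  have hcard1 : ∀ k : Fin K, ((univ.filter (fun i => c i = k)).card : ℝ) = 1 := by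
    intro k; rw [hfib]; simp
  have hentry : ∀ k j, Bagg k j - f Xagg Aagg k j =
      B (e.symm k) j - f Xagg A (e.symm k) j := by
    intro k j
    rw [hres Xagg k j, hfib k]
    simp
  have heq2 : (∑ k, ((univ.filter (fun i => c i = k)).card : ℝ) *
      ∑ j, |Bagg k j - f Xagg Aagg k j|) = ∑ i, ∑ j, |B i j - f Xagg A i j| := by
    calc (∑ k, ((univ.filter (fun i => c i = k)).card : ℝ) *
          ∑ j, |Bagg k j - f Xagg Aagg k j|)
        = ∑ k, ∑ j, |B (e.symm k) j - f Xagg A (e.symm k) j| := by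
          apply Finset.sum_congr rfl
          intro k _
          rw [hcard1 k, one_mul]
          exact Finset.sum_congr rfl fun j _ => by rw [hentry]
      _ = ∑ i, ∑ j, |B i j - f Xagg A i j| :=
          Fintype.sum_equiv e.symm _ _ fun k => rfl
  have h2 : (∑ i, ∑ j, |B i j - f Xstar A i j|) ≤
      (∑ k, ((univ.filter (fun i => c i = k)).card : ℝ) *
        ∑ j, |Bagg k j - f Xagg Aagg k j|) := by
    rw [heq2]; exact hoptstar Xagg hXagg
  linarith
end

section
/- Finite convergence of AID: under the aggregation assumption f(X, WA) = W f(X,A), if in each iteration every cluster violating the sign-based optimality condition is split into strictly smaller nonempty sub-clusters, then the iterative procedure terminates in finitely many iterations, and at termination the solution of the aggregated problem is a global optimum of the original problem min_{X∈Φ} ‖B − f(X,A)‖₁. -/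
open Finset

/-- Aggregated data matrix of `A` for the partition `P`: one row per cluster,
equal to the within-cluster arithmetic mean of the rows of `A`. -/
noncomputable def aggMat {n m : ℕ} (P : Finpartition (Finset.univ : Finset (Fin n)))
    (A : Matrix (Fin n) (Fin m) ℝ) : Matrix {S // S ∈ P.parts} (Fin m) ℝ :=
  fun S j => (∑ i ∈ S.1, A i j) / (S.1.card : ℝ)

/-- Weighted aggregated L1 objective for partition `P` and parameter `X`. -/
noncomputable def aggObj {n m q : ℕ}
    (f : Matrix (Fin m) (Fin q) ℝ → ∀ {ι : Type} [Fintype ι],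
      Matrix ι (Fin m) ℝ → Matrix ι (Fin q) ℝ)
    (B : Matrix (Fin n) (Fin q) ℝ) (A : Matrix (Fin n) (Fin m) ℝ)
    (P : Finpartition (Finset.univ : Finset (Fin n)))
    (X : Matrix (Fin m) (Fin q) ℝ) : ℝ :=
  ∑ S : {S // S ∈ P.parts}, (S.1.card : ℝ) *
    ∑ j, |aggMat P B S j - f X (aggMat P A) S j|

/-- Sign-based optimality condition: within every cluster the residuals share
coordinatewise signs. -/
def signOK {n m q : ℕ}
    (f : Matrix (Fin m) (Fin q) ℝ → ∀ {ι : Type} [Fintype ι],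
      Matrix ι (Fin m) ℝ → Matrix ι (Fin q) ℝ)
    (B : Matrix (Fin n) (Fin q) ℝ) (A : Matrix (Fin n) (Fin m) ℝ)
    (P : Finpartition (Finset.univ : Finset (Fin n)))
    (X : Matrix (Fin m) (Fin q) ℝ) : Prop :=
  ∀ S ∈ P.parts, ∀ j, (∀ i ∈ S, 0 ≤ B i j - f X A i j) ∨
    (∀ i ∈ S, B i j - f X A i j ≤ 0)

/-- Summing over a partition of `Fin n`. -/
private lemma partition_sum {n : ℕ} (P : Finpartition (Finset.univ : Finset (Fin n)))
    (g : Fin n → ℝ) :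
    ∑ i, g i = ∑ S : {S // S ∈ P.parts}, ∑ i ∈ S.1, g i := by
  classical
  have h1 : (Finset.univ : Finset (Fin n)) = P.parts.biUnion id :=
    P.biUnion_parts.symm
  have hdisj : Set.PairwiseDisjoint (↑P.parts) (id : Finset (Fin n) → Finset (Fin n)) :=
    P.supIndep.pairwiseDisjoint
  calc ∑ i, g i = ∑ S ∈ P.parts, ∑ i ∈ S, g i := by
        conv_lhs => rw [h1]
        exact Finset.sum_biUnion hdisj
    _ = ∑ S : {S // S ∈ P.parts}, ∑ i ∈ S.1, g i :=
        (Finset.sum_coe_sort P.parts _).symm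

/-- Closed form for the aggregated objective. -/
private lemma aggObj_eq {n m q : ℕ}
    (f : Matrix (Fin m) (Fin q) ℝ → ∀ {ι : Type} [Fintype ι],
      Matrix ι (Fin m) ℝ → Matrix ι (Fin q) ℝ)
    (hf : ∀ {ι κ : Type} [Fintype ι] [Fintype κ]
      (X : Matrix (Fin m) (Fin q) ℝ) (W : Matrix κ ι ℝ) (A : Matrix ι (Fin m) ℝ),
      f X (W * A) = W * f X A)
    (B : Matrix (Fin n) (Fin q) ℝ) (A : Matrix (Fin n) (Fin m) ℝ)
    (P : Finpartition (Finset.univ : Finset (Fin n)))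
    (X : Matrix (Fin m) (Fin q) ℝ) :
    aggObj f B A P X
      = ∑ S : {S // S ∈ P.parts}, ∑ j, |∑ i ∈ S.1, (B i j - f X A i j)| := by
  classical
  set W : Matrix {S // S ∈ P.parts} (Fin n) ℝ :=
    fun S i => if i ∈ S.1 then ((S.1.card : ℝ))⁻¹ else 0 with hWdef
  have hWmul : ∀ {k : ℕ} (M : Matrix (Fin n) (Fin k) ℝ) (S : {S // S ∈ P.parts}) (j : Fin k),
      (W * M) S j = (∑ i ∈ S.1, M i j) / (S.1.card : ℝ) := by
    intro k M S j
    rw [Matrix.mul_apply]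
    have : ∀ i : Fin n, W S i * M i j
        = if i ∈ S.1 then ((S.1.card : ℝ))⁻¹ * M i j else 0 := by
      intro i; by_cases h : i ∈ S.1 <;> simp [hWdef, h]
    simp only [this]
    rw [Finset.sum_ite_mem, Finset.univ_inter, ← Finset.mul_sum]
    rw [div_eq_mul_inv, mul_comm]
  have hA : aggMat P A = W * A := by
    funext S j
    rw [hWmul]; rfl
  have hB : aggMat P B = W * B := by
    funext S j
    rw [hWmul]; rfl
  have hfa : f X (aggMat P A) = W * f X A := by
    rw [hA, hf]
  unfold aggObj
  refine Finset.sum_congr rfl fun S _ => ?_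
  have hcard : (0 : ℝ) < (S.1.card : ℝ) := by
    have := P.nonempty_of_mem_parts S.2
    exact_mod_cast Finset.card_pos.mpr this
  have hentry : ∀ j, aggMat P B S j - f X (aggMat P A) S j
      = (∑ i ∈ S.1, (B i j - f X A i j)) / (S.1.card : ℝ) := by
    intro j
    rw [hB, hfa, hWmul, hWmul, div_sub_div_same, ← Finset.sum_sub_distrib]
  simp only [hentry]
  have : ∀ j, |(∑ i ∈ S.1, (B i j - f X A i j)) / (S.1.card : ℝ)|
      = |∑ i ∈ S.1, (B i j - f X A i j)| / (S.1.card : ℝ) := by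
    intro j
    rw [abs_div, abs_of_pos hcard]
  simp only [this]
  rw [← Finset.sum_div, mul_div_cancel₀ _ (ne_of_gt hcard)]

/-- Finite convergence of AID: if each aggregated problem is solved optimally and
whenever the sign condition is violated the partition is strictly refined, then
after finitely many iterations the sign condition holds and the aggregated
solution is a global optimum of the original problem. -/
theorem stmt_11 {n m q : ℕ}
    (f : Matrix (Fin m) (Fin q) ℝ → ∀ {ι : Type} [Fintype ι],
      Matrix ι (Fin m) ℝ → Matrix ι (Fin q) ℝ)
    (hf : ∀ {ι κ : Type} [Fintype ι] [Fintype κ]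
      (X : Matrix (Fin m) (Fin q) ℝ) (W : Matrix κ ι ℝ) (A : Matrix ι (Fin m) ℝ),
      f X (W * A) = W * f X A)
    (B : Matrix (Fin n) (Fin q) ℝ) (A : Matrix (Fin n) (Fin m) ℝ)
    (Φ : Set (Matrix (Fin m) (Fin q) ℝ))
    (P : ℕ → Finpartition (Finset.univ : Finset (Fin n)))
    (Xb : ℕ → Matrix (Fin m) (Fin q) ℝ)
    (hXb : ∀ t, Xb t ∈ Φ ∧ ∀ Y ∈ Φ, aggObj f B A (P t) (Xb t) ≤ aggObj f B A (P t) Y)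
    (href : ∀ t, ∀ S ∈ (P (t + 1)).parts, ∃ S' ∈ (P t).parts, S ⊆ S')
    (hstep : ∀ t, ¬ signOK f B A (P t) (Xb t) →
      (P t).parts.card < (P (t + 1)).parts.card) :
    ∃ T, signOK f B A (P T) (Xb T) ∧
      ∀ Y ∈ Φ, (∑ i, ∑ j, |B i j - f (Xb T) A i j|) ≤
        ∑ i, ∑ j, |B i j - f Y A i j| := by
  -- Termination: the sign condition must hold at some iteration.
  have hex : ∃ T, signOK f B A (P T) (Xb T) := by
    by_contra hno
    push_neg at hno
    have hmono : ∀ t, t ≤ (P t).parts.card := by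
      intro t
      induction t with
      | zero => exact Nat.zero_le _
      | succ t ih => have := hstep t (hno t); omega
    have hb : (P (n + 1)).parts.card ≤ n := by
      simpa using (P (n + 1)).card_parts_le_card
    have := hmono (n + 1)
    omega
  obtain ⟨T, hT⟩ := hex
  refine ⟨T, hT, fun Y hY => ?_⟩
  -- original objective, rewritten over the partition
  have horig : ∀ Z : Matrix (Fin m) (Fin q) ℝ,
      (∑ i, ∑ j, |B i j - f Z A i j|)
        = ∑ S : {S // S ∈ (P T).parts}, ∑ j, ∑ i ∈ S.1, |B i j - f Z A i j| := by
    intro Z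
    rw [partition_sum (P T)]
    refine Finset.sum_congr rfl fun S _ => Finset.sum_comm
  -- the aggregated objective is a lower bound of the original one
  have hle : ∀ Z : Matrix (Fin m) (Fin q) ℝ,
      aggObj f B A (P T) Z ≤ ∑ i, ∑ j, |B i j - f Z A i j| := by
    intro Z
    rw [horig Z, aggObj_eq f hf B A (P T) Z]
    refine Finset.sum_le_sum fun S _ => Finset.sum_le_sum fun j _ => ?_
    exact Finset.abs_sum_le_sum_abs _ _
  -- equality under the sign condition
  have heq : (∑ i, ∑ j, |B i j - f (Xb T) A i j|) = aggObj f B A (P T) (Xb T) := by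
    rw [horig (Xb T), aggObj_eq f hf B A (P T) (Xb T)]
    refine Finset.sum_congr rfl fun S _ => Finset.sum_congr rfl fun j _ => ?_
    rcases hT S.1 S.2 j with h | h
    · rw [abs_of_nonneg (Finset.sum_nonneg h)]
      exact Finset.sum_congr rfl fun i hi => abs_of_nonneg (h i hi)
    · rw [abs_of_nonpos (Finset.sum_nonpos h), ← Finset.sum_neg_distrib]
      exact Finset.sum_congr rfl fun i hi => abs_of_nonpos (h i hi)
  calc (∑ i, ∑ j, |B i j - f (Xb T) A i j|)
      = aggObj f B A (P T) (Xb T) := heq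
    _ ≤ aggObj f B A (P T) Y := (hXb T).2 Y hY
    _ ≤ ∑ i, ∑ j, |B i j - f Y A i j| := hle Y
end

section
/- If a cluster C_k is split into two sub-clusters C_{k1}, C_{k2} (nonempty, partitioning C_k), then for every X ∈ Φ, |C_k| ‖B_k^agg − f_k(X,A^agg)‖₁ ≤ |C_{k1}| ‖B_{k1}^agg − f_{k1}(X, A^agg')‖₁ + |C_{k2}| ‖B_{k2}^agg − f_{k2}(X, A^agg')‖₁, where aggregated rows are within-cluster arithmetic means computed before and after the split. That is, splitting a cluster can only increase the (per-X) aggregated objective contribution. -/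
open Finset

/-- Splitting a cluster can only increase its contribution to the aggregated
objective: if a nonempty cluster `S` is split into nonempty disjoint sub-clusters
`S₁` and `S₂`, then for every feasible `X` the weighted L1 error of `S` is at
most the sum of the weighted L1 errors of `S₁` and `S₂` (aggregated rows being
within-cluster means, with the corresponding rows of `f` equal to the means of
the rows of `f(X,A)` by Lemma 1). -/
theorem stmt_13 {m q n : ℕ}
    (f : ∀ {r : ℕ}, Matrix (Fin m) (Fin q) ℝ → Matrix (Fin r) (Fin m) ℝ →
      Matrix (Fin r) (Fin q) ℝ)
    (hf : ∀ {p r : ℕ} (X : Matrix (Fin m) (Fin q) ℝ)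
      (W : Matrix (Fin p) (Fin r) ℝ) (A : Matrix (Fin r) (Fin m) ℝ),
      f X (W * A) = W * f X A)
    (B : Matrix (Fin n) (Fin q) ℝ) (A : Matrix (Fin n) (Fin m) ℝ)
    (S S₁ S₂ : Finset (Fin n))
    (hS₁ : S₁.Nonempty) (hS₂ : S₂.Nonempty)
    (hdisj : Disjoint S₁ S₂) (hunion : S₁ ∪ S₂ = S)
    (Φ : Set (Matrix (Fin m) (Fin q) ℝ)) :
    ∀ X ∈ Φ,
      (S.card : ℝ) * ∑ j, |(∑ i ∈ S, B i j) / (S.card : ℝ) -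
          (∑ i ∈ S, f X A i j) / (S.card : ℝ)| ≤
      (S₁.card : ℝ) * (∑ j, |(∑ i ∈ S₁, B i j) / (S₁.card : ℝ) -
          (∑ i ∈ S₁, f X A i j) / (S₁.card : ℝ)|) +
      (S₂.card : ℝ) * (∑ j, |(∑ i ∈ S₂, B i j) / (S₂.card : ℝ) -
          (∑ i ∈ S₂, f X A i j) / (S₂.card : ℝ)|) := by
  intro X _
  have key : ∀ (T : Finset (Fin n)), T.Nonempty →
      (T.card : ℝ) * ∑ j, |(∑ i ∈ T, B i j) / (T.card : ℝ) -
        (∑ i ∈ T, f X A i j) / (T.card : ℝ)| =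
      ∑ j, |(∑ i ∈ T, B i j) - (∑ i ∈ T, f X A i j)| := by
    intro T hT
    have hc : (0:ℝ) < T.card := by exact_mod_cast Finset.card_pos.mpr hT
    rw [Finset.mul_sum]
    refine Finset.sum_congr rfl fun j _ => ?_
    rw [div_sub_div_same, abs_div, abs_of_pos hc]
    field_simp
  have hS : S.Nonempty := by
    rw [← hunion]; exact hS₁.mono Finset.subset_union_left
  rw [key S hS, key S₁ hS₁, key S₂ hS₂]
  rw [← Finset.sum_add_distrib]
  refine Finset.sum_le_sum fun j _ => ?_
  rw [← hunion, Finset.sum_union hdisj, Finset.sum_union hdisj]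
  have : (∑ i ∈ S₁, B i j + ∑ i ∈ S₂, B i j) -
      (∑ i ∈ S₁, f X A i j + ∑ i ∈ S₂, f X A i j) =
      ((∑ i ∈ S₁, B i j) - ∑ i ∈ S₁, f X A i j) +
      ((∑ i ∈ S₂, B i j) - ∑ i ∈ S₂, f X A i j) := by ring
  rw [this]
  exact abs_add_le _ _
end

section
/- In the AID framework applied to constrained L1 regression with cardinality constraint Φ = {x ∈ ℝ^m : ‖x‖₀ = p}: if x̄ optimally solves the weighted aggregated problem min_{‖x‖₀ = p} ∑_k |C_k| |B_k^agg − A_k^agg · x| and within each cluster all residuals B_i − A_i·x̄ share the same sign, then x̄ solves the original subset-selection problem min_{‖x‖₀ = p} ∑_{i=1}^n |B_i − A_i · x|. -/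
open Finset

/-- Optimality condition for subset selection in L1 regression: if `x̄` has
exactly `p` nonzero entries, optimally solves the weighted aggregated problem
over the cardinality-constrained set, and within every cluster all residuals
share a sign, then `x̄` solves the original subset-selection problem. -/
theorem stmt_17 {n m K p : ℕ}
    (c : Fin n → Fin K) (hc : ∀ k, ∃ i, c i = k)
    (B : Fin n → ℝ) (A : Matrix (Fin n) (Fin m) ℝ)
    (Bagg : Fin K → ℝ) (Aagg : Matrix (Fin K) (Fin m) ℝ)
    (hBagg : ∀ k, Bagg k = (∑ i ∈ univ.filter (fun i => c i = k), B i) /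
      ((univ.filter (fun i => c i = k)).card : ℝ))
    (hAagg : ∀ k j, Aagg k j = (∑ i ∈ univ.filter (fun i => c i = k), A i j) /
      ((univ.filter (fun i => c i = k)).card : ℝ))
    (xbar : Fin m → ℝ)
    (hcard : (univ.filter (fun j => xbar j ≠ 0)).card = p)
    (hopt : ∀ x : Fin m → ℝ, (univ.filter (fun j => x j ≠ 0)).card = p →
      (∑ k, ((univ.filter (fun i => c i = k)).card : ℝ) *
        |Bagg k - ∑ j, Aagg k j * xbar j|) ≤
      (∑ k, ((univ.filter (fun i => c i = k)).card : ℝ) *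
        |Bagg k - ∑ j, Aagg k j * x j|))
    (hsign : ∀ k : Fin K,
      (∀ i ∈ univ.filter (fun i => c i = k), 0 ≤ B i - ∑ j, A i j * xbar j) ∨
      (∀ i ∈ univ.filter (fun i => c i = k), B i - ∑ j, A i j * xbar j ≤ 0)) :
    ∀ x : Fin m → ℝ, (univ.filter (fun j => x j ≠ 0)).card = p →
      (∑ i, |B i - ∑ j, A i j * xbar j|) ≤ ∑ i, |B i - ∑ j, A i j * x j| := by
  intro x hx
  have hcardpos : ∀ k : Fin K, (0 : ℝ) < ((univ.filter (fun i => c i = k)).card : ℝ) := by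
    intro k
    obtain ⟨i, hi⟩ := hc k
    have hmem : i ∈ univ.filter (fun i => c i = k) := by simp [hi]
    exact_mod_cast Finset.card_pos.mpr ⟨i, hmem⟩
  -- key identity: weighted aggregated term = |sum of residuals over cluster|
  have key : ∀ (y : Fin m → ℝ) (k : Fin K),
      ((univ.filter (fun i => c i = k)).card : ℝ) * |Bagg k - ∑ j, Aagg k j * y j| =
      |∑ i ∈ univ.filter (fun i => c i = k), (B i - ∑ j, A i j * y j)| := by
    intro y k
    have hne : ((univ.filter (fun i => c i = k)).card : ℝ) ≠ 0 := ne_of_gt (hcardpos k)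
    have h2 : ∑ j, Aagg k j * y j =
        (∑ i ∈ univ.filter (fun i => c i = k), ∑ j, A i j * y j) /
          ((univ.filter (fun i => c i = k)).card : ℝ) := by
      rw [Finset.sum_comm, Finset.sum_div]
      refine Finset.sum_congr rfl fun j _ => ?_
      rw [hAagg k j, div_mul_eq_mul_div, Finset.sum_mul]
    have h1 : ((univ.filter (fun i => c i = k)).card : ℝ) *
        (Bagg k - ∑ j, Aagg k j * y j) =
        ∑ i ∈ univ.filter (fun i => c i = k), (B i - ∑ j, A i j * y j) := by
      rw [hBagg k, h2, Finset.sum_sub_distrib, ← sub_div, mul_div_cancel₀ _ hne]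
    rw [← abs_of_pos (hcardpos k), ← abs_mul, h1]
  -- lower bound: aggregated objective ≤ original, for any y
  have lower : ∀ y : Fin m → ℝ,
      (∑ k, ((univ.filter (fun i => c i = k)).card : ℝ) *
        |Bagg k - ∑ j, Aagg k j * y j|) ≤ ∑ i, |B i - ∑ j, A i j * y j| := by
    intro y
    rw [← Finset.sum_fiberwise univ c (fun i => |B i - ∑ j, A i j * y j|)]
    refine Finset.sum_le_sum fun k _ => ?_
    rw [key y k]
    exact Finset.abs_sum_le_sum_abs _ _
  -- equality at xbar thanks to the sign condition
  have eqbar : (∑ i, |B i - ∑ j, A i j * xbar j|) =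
      ∑ k, ((univ.filter (fun i => c i = k)).card : ℝ) *
        |Bagg k - ∑ j, Aagg k j * xbar j| := by
    rw [← Finset.sum_fiberwise univ c (fun i => |B i - ∑ j, A i j * xbar j|)]
    refine Finset.sum_congr rfl fun k _ => ?_
    rw [key xbar k]
    rcases hsign k with h | h
    · rw [abs_of_nonneg (Finset.sum_nonneg h)]
      exact Finset.sum_congr rfl fun i hi => abs_of_nonneg (h i hi)
    · rw [abs_of_nonpos (Finset.sum_nonpos h), ← Finset.sum_neg_distrib]
      exact Finset.sum_congr rfl fun i hi => abs_of_nonpos (h i hi)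
  calc (∑ i, |B i - ∑ j, A i j * xbar j|)
      = ∑ k, ((univ.filter (fun i => c i = k)).card : ℝ) *
          |Bagg k - ∑ j, Aagg k j * xbar j| := eqbar
    _ ≤ ∑ k, ((univ.filter (fun i => c i = k)).card : ℝ) *
          |Bagg k - ∑ j, Aagg k j * x j| := hopt x hx
    _ ≤ ∑ i, |B i - ∑ j, A i j * x j| := lower x
end

section
/- For the orthogonal Procrustes problem min_{XᵀX = I_p} ‖B − AX‖₁ with B, A ∈ ℝ^{n×m}: if X̄ optimally solves the weighted aggregated problem min_{XᵀX=I_p} ∑_k |C_k| ‖B_k^agg − A_k^agg X‖₁ and within every cluster the residual rows B_i − A_i X̄ share coordinatewise signs, then X̄ is a global optimum of the original problem. -/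
open Finset Matrix

/-- Optimality condition specialized to the orthogonal Procrustes problem
`min_{XᵀX = I} ‖B − AX‖₁`: if `X̄` optimally solves the weighted aggregated
problem over orthogonal matrices and within every cluster the residual rows
`B_i − A_i X̄` share coordinatewise signs, then `X̄` is a global optimum of the
original problem. -/
theorem stmt_18 {n m K : ℕ}
    (B A : Matrix (Fin n) (Fin m) ℝ)
    (c : Fin n → Fin K) (hc : ∀ k, ∃ i, c i = k)
    (Bagg Aagg : Matrix (Fin K) (Fin m) ℝ)
    (hBagg : ∀ k j, Bagg k j = (∑ i ∈ univ.filter (fun i => c i = k), B i j) /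
      ((univ.filter (fun i => c i = k)).card : ℝ))
    (hAagg : ∀ k j, Aagg k j = (∑ i ∈ univ.filter (fun i => c i = k), A i j) /
      ((univ.filter (fun i => c i = k)).card : ℝ))
    (Xbar : Matrix (Fin m) (Fin m) ℝ) (hXbar : Xbarᵀ * Xbar = 1)
    (hopt : ∀ X : Matrix (Fin m) (Fin m) ℝ, Xᵀ * X = 1 →
      (∑ k, ((univ.filter (fun i => c i = k)).card : ℝ) *
        ∑ j, |Bagg k j - (Aagg * Xbar) k j|) ≤
      (∑ k, ((univ.filter (fun i => c i = k)).card : ℝ) *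
        ∑ j, |Bagg k j - (Aagg * X) k j|))
    (hsign : ∀ k : Fin K, ∀ j : Fin m,
      (∀ i ∈ univ.filter (fun i => c i = k), 0 ≤ B i j - (A * Xbar) i j) ∨
      (∀ i ∈ univ.filter (fun i => c i = k), B i j - (A * Xbar) i j ≤ 0)) :
    ∀ X : Matrix (Fin m) (Fin m) ℝ, Xᵀ * X = 1 →
      (∑ i, ∑ j, |B i j - (A * Xbar) i j|) ≤
        ∑ i, ∑ j, |B i j - (A * X) i j| := by
  intro X hX
  have hcard : ∀ k : Fin K, 0 < ((univ.filter (fun i => c i = k)).card : ℝ) := by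
    intro k
    obtain ⟨i, hi⟩ := hc k
    have : i ∈ univ.filter (fun i => c i = k) := by simp [hi]
    exact_mod_cast Finset.card_pos.mpr ⟨i, this⟩
  -- key aggregation identity
  have key : ∀ (Y : Matrix (Fin m) (Fin m) ℝ) (k : Fin K) (j : Fin m),
      ∑ i ∈ univ.filter (fun i => c i = k), (B i j - (A * Y) i j)
        = ((univ.filter (fun i => c i = k)).card : ℝ) * (Bagg k j - (Aagg * Y) k j) := by
    intro Y k j
    have hne : ((univ.filter (fun i => c i = k)).card : ℝ) ≠ 0 := (hcard k).ne'
    have hAY : (Aagg * Y) k j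
        = (∑ i ∈ univ.filter (fun i => c i = k), (A * Y) i j)
          / ((univ.filter (fun i => c i = k)).card : ℝ) := by
      simp only [Matrix.mul_apply, hAagg, div_mul_eq_mul_div, Finset.sum_mul,
        ← Finset.sum_div]
      rw [Finset.sum_comm]
    rw [Finset.sum_sub_distrib, hBagg, hAY]
    field_simp
  -- rewrite total sums fiberwise
  have fib : ∀ (Y : Matrix (Fin m) (Fin m) ℝ),
      (∑ i, ∑ j, |B i j - (A * Y) i j|)
        = ∑ k, ∑ j, ∑ i ∈ univ.filter (fun i => c i = k), |B i j - (A * Y) i j| := by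
    intro Y
    rw [← Finset.sum_fiberwise univ c (fun i => ∑ j, |B i j - (A * Y) i j|)]
    exact Finset.sum_congr rfl fun k _ => Finset.sum_comm
  rw [fib Xbar, fib X]
  have hL : (∑ k, ∑ j, ∑ i ∈ univ.filter (fun i => c i = k), |B i j - (A * Xbar) i j|)
      = ∑ k, ((univ.filter (fun i => c i = k)).card : ℝ) *
          ∑ j, |Bagg k j - (Aagg * Xbar) k j| := by
    refine Finset.sum_congr rfl fun k _ => ?_
    rw [Finset.mul_sum]
    refine Finset.sum_congr rfl fun j _ => ?_
    have habs : ∑ i ∈ univ.filter (fun i => c i = k), |B i j - (A * Xbar) i j|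
        = |∑ i ∈ univ.filter (fun i => c i = k), (B i j - (A * Xbar) i j)| := by
      rcases hsign k j with h | h
      · rw [abs_of_nonneg (Finset.sum_nonneg h)]
        exact Finset.sum_congr rfl fun i hi => abs_of_nonneg (h i hi)
      · rw [abs_of_nonpos (Finset.sum_nonpos h), ← Finset.sum_neg_distrib]
        exact Finset.sum_congr rfl fun i hi => abs_of_nonpos (h i hi)
    rw [habs, key Xbar k j, abs_mul, abs_of_pos (hcard k)]
  rw [hL]
  calc (∑ k, ((univ.filter (fun i => c i = k)).card : ℝ) *
          ∑ j, |Bagg k j - (Aagg * Xbar) k j|)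
      ≤ ∑ k, ((univ.filter (fun i => c i = k)).card : ℝ) *
          ∑ j, |Bagg k j - (Aagg * X) k j| := hopt X hX
    _ ≤ ∑ k, ∑ j, ∑ i ∈ univ.filter (fun i => c i = k), |B i j - (A * X) i j| := by
        refine Finset.sum_le_sum fun k _ => ?_
        rw [Finset.mul_sum]
        refine Finset.sum_le_sum fun j _ => ?_
        have := key X k j
        calc ((univ.filter (fun i => c i = k)).card : ℝ) * |Bagg k j - (Aagg * X) k j|
            = |∑ i ∈ univ.filter (fun i => c i = k), (B i j - (A * X) i j)| := by
              rw [this, abs_mul, abs_of_pos (hcard k)]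
          _ ≤ ∑ i ∈ univ.filter (fun i => c i = k), |B i j - (A * X) i j| :=
              Finset.abs_sum_le_sum_abs _ _
end
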